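/- If x_{a_i,b_j} divides the leading monomial of det M(A,B) with respect to the term order ≼, then lm(det M(A∖{a_i}, B∖{b_j})) · x_{a_i,b_j} = lm(det M(A,B)). -/

import Mathlib

/-- The `i`-th smallest element of `A` (0-based `i`), extended beyond `A.card`
by values larger than every element of `{1,…,n}`. -/
def enumExt (n : ℕ) (A : Finset ℕ) (i : ℕ) : ℕ :=
  if hi : i < A.card then A.orderEmbOfFin rfl ⟨i, hi⟩ else n + 1 + i

/-- The defining property of the shift `ℓ` in the definition of `N(A,B)`:
`a_{i+ℓ} > b_i` for all `i = 1,…,|A|−ℓ` (0-based here, the extension making the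
out-of-range cases vacuously true for subsets of `{1,…,n}`). -/
def ShiftOK (n : ℕ) (A B : Finset ℕ) (ℓ : ℕ) : Prop :=
  ∀ i < A.card, enumExt n B i < enumExt n A (i + ℓ)

open Classical in
/-- The minimal shift `ℓ` with `a_{i+ℓ} > b_i` for all `i ≤ |A|−ℓ`; minimality is
equivalent to the side condition `ℓ = 0` or `a_{j+ℓ−1} ≤ b_j` for some `j`. -/
noncomputable def ell (n : ℕ) (A B : Finset ℕ) : ℕ :=
  if h : ∃ ℓ, ShiftOK n A B ℓ then Nat.find h else 0

/-- The set `N(A,B) = {(a_{(i+ℓ) mod* m}, b_i) : i = 1,…,m}` (with `m = |A| = |B|`,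
`mod*` taking representatives in `{1,…,m}`): the longest diagonal of `M(A,B)` strictly
below the main diagonal of `X`, together with the complementary diagonal. -/
noncomputable def NAB (n : ℕ) (A B : Finset ℕ) : Finset (ℕ × ℕ) :=
  (Finset.range A.card).image
    (fun i => (enumExt n A ((i + ell n A B) % A.card), enumExt n B i))

/-- The row- and column-selected submatrix `M(A,B) = (x_{ij})_{i∈A, j∈B}` of the generic
matrix `X = (x_{ij})`, of size `m × m` (used with `m = |A| = |B|`). -/
noncomputable def MAB (K : Type) [Field K] (n : ℕ) (A B : Finset ℕ) (m : ℕ) :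
    Matrix (Fin m) (Fin m) (MvPolynomial (ℕ × ℕ) K) :=
  Matrix.of fun i j => MvPolynomial.X (enumExt n A (i : ℕ), enumExt n B (j : ℕ))


open Finset MvPolynomial in
private lemma prodXeq (K : Type) [CommSemiring K] {ι τ : Type} [DecidableEq τ]
    (s : Finset ι) (v : ι → τ) :
    (∏ i ∈ s, (X (v i) : MvPolynomial τ K)) = monomial (∑ i ∈ s, Finsupp.single (v i) 1) 1 := by
  classical
  induction s using Finset.induction with
  | empty => simp
  | insert _ _ h ih =>
      rw [Finset.prod_insert h, Finset.sum_insert h, ih, MvPolynomial.X,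
        MvPolynomial.monomial_mul, one_mul]

private lemma sumSinglePos {m : ℕ} (v : Fin m → ℕ × ℕ) (i : Fin m) :
    0 < (∑ i', Finsupp.single (v i') 1 : (ℕ×ℕ) →₀ ℕ) (v i) := by
  rw [Finsupp.finset_sum_apply]
  calc (0:ℕ) < 1 := one_pos
    _ = (Finsupp.single (v i) 1 : (ℕ×ℕ) →₀ ℕ) (v i) := by simp
    _ ≤ _ := Finset.single_le_sum
        (f := fun j => (Finsupp.single (v j) 1 : (ℕ×ℕ) →₀ ℕ) (v i))
        (fun j _ => Nat.zero_le _) (Finset.mem_univ i)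

private lemma existsOfSumSinglePos {m : ℕ} (v : Fin m → ℕ × ℕ) (p : ℕ × ℕ)
    (h : 0 < (∑ i', Finsupp.single (v i') 1 : (ℕ×ℕ) →₀ ℕ) p) : ∃ i, v i = p := by
  rw [Finsupp.finset_sum_apply] at h
  obtain ⟨i, _, hi⟩ := Finset.exists_ne_zero_of_sum_ne_zero h.ne'
  refine ⟨i, ?_⟩
  by_contra hne
  exact hi (by simp [Finsupp.single_apply, hne])

private lemma enumExtInj {n : ℕ} {A : Finset ℕ} {i j : ℕ} (hi : i < A.card) (hj : j < A.card)
    (h : enumExt n A i = enumExt n A j) : i = j := by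
  unfold enumExt at h
  rw [dif_pos hi, dif_pos hj] at h
  exact congrArg Fin.val ((A.orderEmbOfFin rfl).injective h)

private lemma enumExtEqOrderEmb {n : ℕ} {A : Finset ℕ} {m : ℕ} (h : A.card = m) {i : ℕ}
    (hi : i < m) : enumExt n A i = A.orderEmbOfFin h ⟨i, hi⟩ := by
  subst h; rw [enumExt, dif_pos hi]

private lemma enumExtMem {n : ℕ} {A : Finset ℕ} {m : ℕ} (h : A.card = m) {i : ℕ}
    (hi : i < m) : enumExt n A i ∈ A := by
  rw [enumExtEqOrderEmb h hi]; exact Finset.orderEmbOfFin_mem A h _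

private lemma enumExtSurj {n : ℕ} {A : Finset ℕ} {m : ℕ} (h : A.card = m) {x : ℕ}
    (hx : x ∈ A) : ∃ i : Fin m, enumExt n A (i : ℕ) = x := by
  have hx' : x ∈ Set.range (A.orderEmbOfFin h) := by
    rw [Finset.range_orderEmbOfFin]; exact hx
  obtain ⟨i, hi⟩ := hx'
  exact ⟨i, by rw [enumExtEqOrderEmb h i.2, Fin.eta]; exact hi⟩

private lemma enumExtStrictMono {n : ℕ} {A : Finset ℕ} {m : ℕ} (h : A.card = m) {i j : ℕ}
    (hi : i < m) (hj : j < m) (hij : i < j) : enumExt n A i < enumExt n A j := by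
  rw [enumExtEqOrderEmb h hi, enumExtEqOrderEmb h hj]
  exact (A.orderEmbOfFin h).strictMono hij

private lemma enumExtErase {n k : ℕ} {A : Finset ℕ} (hA : A.card = k + 1) (i0 : Fin (k+1))
    (j : Fin k) :
    enumExt n (A.erase (enumExt n A (i0 : ℕ))) (j : ℕ)
      = enumExt n A ((i0.succAbove j : Fin (k+1)) : ℕ) := by
  set x := enumExt n A (i0 : ℕ) with hxdef
  have hxA : x ∈ A := enumExtMem hA i0.2
  have h' : (A.erase x).card = k := by
    rw [Finset.card_erase_of_mem hxA, hA]; omega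
  set f : Fin k → ℕ := fun j => enumExt n A ((i0.succAbove j : Fin (k+1)) : ℕ) with hf
  have hmono : StrictMono f := by
    intro a b hab
    exact enumExtStrictMono hA (i0.succAbove a).2 (i0.succAbove b).2
      (Fin.strictMono_succAbove i0 hab)
  have hfs : ∀ a, f a ∈ A.erase x := by
    intro a
    refine Finset.mem_erase.2 ⟨?_, enumExtMem hA (i0.succAbove a).2⟩
    intro hc
    have : ((i0.succAbove a : Fin (k+1)) : ℕ) = (i0 : ℕ) :=
      enumExtInj (lt_of_lt_of_eq (i0.succAbove a).2 hA.symm) (lt_of_lt_of_eq i0.2 hA.symm) hc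
    exact Fin.succAbove_ne i0 a (Fin.ext this)
  have huniq := Finset.orderEmbOfFin_unique h' hfs hmono
  rw [enumExtEqOrderEmb h' j.2, Fin.eta, ← huniq]

open Finset MvPolynomial in
private lemma MABdetSupport (K : Type) [Field K] (n m : ℕ) (A B : Finset ℕ)
    (hA : A.card = m) (hB : B.card = m) (ν : (ℕ × ℕ) →₀ ℕ) :
    ν ∈ (MAB K n A B m).det.support ↔ ∃ σ : Equiv.Perm (Fin m),
      ν = ∑ i, Finsupp.single (enumExt n A ((σ i : Fin m) : ℕ), enumExt n B ((i : Fin m) : ℕ)) 1 := by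
  classical
  set D : Equiv.Perm (Fin m) → ((ℕ × ℕ) →₀ ℕ) :=
    fun σ => ∑ i, Finsupp.single (enumExt n A ((σ i : Fin m) : ℕ), enumExt n B ((i : Fin m) : ℕ)) 1 with hD
  have hEinj : ∀ i j : Fin m, enumExt n A (i : ℕ) = enumExt n A (j : ℕ) → i = j := fun i j h =>
    Fin.ext (enumExtInj (hA ▸ i.2) (hA ▸ j.2) h)
  have hFinj : ∀ i j : Fin m, enumExt n B (i : ℕ) = enumExt n B (j : ℕ) → i = j := fun i j h =>
    Fin.ext (enumExtInj (hB ▸ i.2) (hB ▸ j.2) h)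
  have hDinj : Function.Injective D := by
    intro σ σ' h
    refine Equiv.ext fun i => ?_
    have hpos : 0 < (D σ') (enumExt n A ((σ i : Fin m) : ℕ), enumExt n B ((i : Fin m) : ℕ)) := by
      rw [← h]
      exact sumSinglePos (fun i' => (enumExt n A ((σ i' : Fin m) : ℕ), enumExt n B ((i' : Fin m) : ℕ))) i
    obtain ⟨i', hi'⟩ := existsOfSumSinglePos _ _ hpos
    have h1 := congrArg Prod.fst hi'
    have h2 := congrArg Prod.snd hi'
    simp only [] at h1 h2
    have : i' = i := hFinj _ _ h2
    subst this
    exact (hEinj _ _ h1).symm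
  have hsign : ∀ σ : Equiv.Perm (Fin m), (((Equiv.Perm.sign σ : ℤ)) : K) ≠ 0 := by
    intro σ
    rcases Int.units_eq_one_or (Equiv.Perm.sign σ) with h | h <;> simp [h]
  have hdet : (MAB K n A B m).det
      = ∑ σ : Equiv.Perm (Fin m), monomial (D σ) (((Equiv.Perm.sign σ : ℤ)) : K) := by
    rw [Matrix.det_apply']
    refine Finset.sum_congr rfl fun σ _ => ?_
    have hprod : (∏ i, (MAB K n A B m) (σ i) i) = monomial (D σ) 1 := by
      simp only [MAB, Matrix.of_apply]
      exact prodXeq K univ _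
    rw [hprod, ← map_intCast (C : K →+* MvPolynomial (ℕ × ℕ) K), C_mul_monomial, mul_one]
  rw [MvPolynomial.mem_support_iff, hdet]
  constructor
  · intro hne
    rw [MvPolynomial.coeff_sum] at hne
    obtain ⟨σ, _, hσ⟩ := Finset.exists_ne_zero_of_sum_ne_zero hne
    rw [MvPolynomial.coeff_monomial] at hσ
    by_cases hc : D σ = ν
    · exact ⟨σ, hc.symm⟩
    · simp [hc] at hσ
  · rintro ⟨σ, rfl⟩
    rw [MvPolynomial.coeff_sum]
    have hz : ∀ σ' ∈ (univ : Finset (Equiv.Perm (Fin m))), σ' ≠ σ →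
        MvPolynomial.coeff (D σ) (monomial (D σ') (((Equiv.Perm.sign σ' : ℤ)) : K)) = 0 := by
      intro σ' _ hne
      rw [MvPolynomial.coeff_monomial, if_neg (fun hc => hne (hDinj hc))]
    rw [Finset.sum_eq_single_of_mem σ (Finset.mem_univ σ) hz,
      MvPolynomial.coeff_monomial, if_pos rfl]
    exact hsign σ

/-- If `x_{a_i,b_j}` divides the leading monomial of `det M(A,B)` with respect to a term
order `≺` (an irreflexive, transitive, total, addition-compatible order on exponent
vectors), then `lm(det M(A∖{a_i}, B∖{b_j})) · x_{a_i,b_j} = lm(det M(A,B))`;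
the leading monomial is characterized as the monomial of the support all of whose fellow
support elements are `≺`-smaller. -/
theorem stmt_6 (K : Type) [Field K] (n k : ℕ) (hk : 1 ≤ k) (hkn : k < n)
    (A B : Finset ℕ) (hAn : A ⊆ Finset.Icc 1 n) (hBn : B ⊆ Finset.Icc 1 n)
    (hA : A.card = k + 1) (hB : B.card = k + 1)
    (lt : ((ℕ × ℕ) →₀ ℕ) → ((ℕ × ℕ) →₀ ℕ) → Prop)
    (hirr : ∀ μ, ¬ lt μ μ)
    (htrans : ∀ μ ν τ, lt μ ν → lt ν τ → lt μ τ)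
    (htotal : ∀ μ ν, μ ≠ ν → lt μ ν ∨ lt ν μ)
    (hadd : ∀ μ ν τ, lt μ ν → lt (μ + τ) (ν + τ))
    (x y : ℕ) (hx : x ∈ A) (hy : y ∈ B)
    (μ : (ℕ × ℕ) →₀ ℕ)
    (hμ : μ ∈ (MAB K n A B (k + 1)).det.support)
    (hμmax : ∀ ν ∈ (MAB K n A B (k + 1)).det.support, ν ≠ μ → lt ν μ)
    (hdiv : 1 ≤ μ (x, y)) :
    (μ - Finsupp.single (x, y) 1) ∈ (MAB K n (A.erase x) (B.erase y) k).det.support ∧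
    ∀ ν ∈ (MAB K n (A.erase x) (B.erase y) k).det.support,
      ν ≠ μ - Finsupp.single (x, y) 1 → lt ν (μ - Finsupp.single (x, y) 1) := by
  classical
  obtain ⟨i0, hx0⟩ := enumExtSurj (n := n) hA hx
  obtain ⟨j0, hy0⟩ := enumExtSurj (n := n) hB hy
  have hcardA' : (A.erase x).card = k := by rw [Finset.card_erase_of_mem hx, hA]; omega
  have hcardB' : (B.erase y).card = k := by rw [Finset.card_erase_of_mem hy, hB]; omega
  set e : (ℕ × ℕ) →₀ ℕ := Finsupp.single (x, y) 1 with he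
  -- enumerations of the erased sets
  have hEA : ∀ j : Fin k, enumExt n (A.erase x) (j : ℕ)
      = enumExt n A ((i0.succAbove j : Fin (k+1)) : ℕ) := by
    intro j; rw [← hx0]; exact enumExtErase hA i0 j
  have hFB : ∀ j : Fin k, enumExt n (B.erase y) (j : ℕ)
      = enumExt n B ((j0.succAbove j : Fin (k+1)) : ℕ) := by
    intro j; rw [← hy0]; exact enumExtErase hB j0 j
  -- key sum decomposition
  have hkey : ∀ (σ' : Equiv.Perm (Fin (k+1))) (τ' : Equiv.Perm (Fin k)),
      σ' j0 = i0 → (∀ j, σ' (j0.succAbove j) = i0.succAbove (τ' j)) →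
      (∑ i, Finsupp.single (enumExt n A ((σ' i : Fin (k+1)) : ℕ),
          enumExt n B ((i : Fin (k+1)) : ℕ)) 1)
        = e + ∑ j, Finsupp.single (enumExt n (A.erase x) ((τ' j : Fin k) : ℕ),
            enumExt n (B.erase y) ((j : Fin k) : ℕ)) 1 := by
    intro σ' τ' h0 hs
    rw [Fin.sum_univ_succAbove (fun i => Finsupp.single
      (enumExt n A ((σ' i : Fin (k+1)) : ℕ), enumExt n B ((i : Fin (k+1)) : ℕ)) 1) j0,
      h0, hx0, hy0]
    congr 1
    refine Finset.sum_congr rfl fun j _ => ?_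
    rw [hs j, ← hEA (τ' j), ← hFB j]
  -- the leading monomial comes from a permutation σ with σ j0 = i0
  obtain ⟨σ, hμσ⟩ := (MABdetSupport K n (k+1) A B hA hB μ).1 hμ
  have hσj0 : σ j0 = i0 := by
    have hpos : 0 < μ (x, y) := hdiv
    rw [hμσ] at hpos
    obtain ⟨i, hi⟩ := existsOfSumSinglePos _ _ hpos
    have h1 := congrArg Prod.fst hi
    have h2 := congrArg Prod.snd hi
    simp only [] at h1 h2
    have hij : i = j0 := Fin.ext (enumExtInj (lt_of_lt_of_eq i.2 hB.symm) (lt_of_lt_of_eq j0.2 hB.symm) (h2.trans hy0.symm))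
    subst hij
    exact Fin.ext (enumExtInj (lt_of_lt_of_eq (σ i).2 hA.symm) (lt_of_lt_of_eq i0.2 hA.symm) (h1.trans hx0.symm))
  -- the induced permutation τ of Fin k
  set π : Option (Fin k) ≃ Option (Fin k) :=
    ((finSuccEquiv' j0).symm.trans (σ.trans (finSuccEquiv' i0))) with hπ
  have hπ0 : π none = none := by
    simp [hπ, Equiv.trans_apply, finSuccEquiv'_symm_none, hσj0, finSuccEquiv'_at]
  set τ : Equiv.Perm (Fin k) := Equiv.removeNone π with hτdef
  have hτ : ∀ j, σ (j0.succAbove j) = i0.succAbove (τ j) := by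
    intro j
    have hne : ∃ a, π (some j) = some a := by
      cases h : π (some j) with
      | none => exact absurd (π.injective (h.trans hπ0.symm)) (by simp)
      | some a => exact ⟨a, rfl⟩
    have h1 : some (τ j) = π (some j) := Equiv.removeNone_some π hne
    have h2 : π (some j) = finSuccEquiv' i0 (σ (j0.succAbove j)) := by
      simp [hπ, Equiv.trans_apply, finSuccEquiv'_symm_some]
    have := h1.trans h2
    have h3 := congrArg (finSuccEquiv' i0).symm this
    simpa [finSuccEquiv'_symm_some] using h3.symm
  have hμ_eq : μ = e + ∑ j, Finsupp.single (enumExt n (A.erase x) ((τ j : Fin k) : ℕ),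
      enumExt n (B.erase y) ((j : Fin k) : ℕ)) 1 := by
    rw [hμσ]; exact hkey σ τ hσj0 hτ
  have hμe : μ - e = ∑ j, Finsupp.single (enumExt n (A.erase x) ((τ j : Fin k) : ℕ),
      enumExt n (B.erase y) ((j : Fin k) : ℕ)) 1 := by
    rw [hμ_eq, add_tsub_cancel_left]
  have hle : e ≤ μ := Finsupp.single_le_iff.2 hdiv
  constructor
  · exact (MABdetSupport K n k (A.erase x) (B.erase y) hcardA' hcardB' _).2 ⟨τ, hμe⟩
  · intro ν hν hne
    obtain ⟨τ', hντ'⟩ := (MABdetSupport K n k (A.erase x) (B.erase y) hcardA' hcardB' ν).1 hν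
    set σ' : Equiv.Perm (Fin (k+1)) :=
      ((finSuccEquiv' j0).trans (Equiv.optionCongr τ')).trans (finSuccEquiv' i0).symm with hσ'
    have h0 : σ' j0 = i0 := by
      simp [hσ', Equiv.trans_apply, finSuccEquiv'_at]
    have hs : ∀ j, σ' (j0.succAbove j) = i0.succAbove (τ' j) := by
      intro j
      simp [hσ', Equiv.trans_apply, finSuccEquiv'_succAbove, finSuccEquiv'_symm_some]
    have hνe : e + ν = ∑ i, Finsupp.single (enumExt n A ((σ' i : Fin (k+1)) : ℕ),
        enumExt n B ((i : Fin (k+1)) : ℕ)) 1 := by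
      rw [hντ', hkey σ' τ' h0 hs]
    have hmem : e + ν ∈ (MAB K n A B (k+1)).det.support :=
      (MABdetSupport K n (k+1) A B hA hB _).2 ⟨σ', hνe⟩
    have hneq : e + ν ≠ μ := by
      intro hc
      apply hne
      have : e + ν = e + (μ - e) := by rw [hc, hμe]; exact hμ_eq
      exact add_left_cancel this
    have hlt : lt (e + ν) μ := hμmax _ hmem hneq
    by_contra hcon
    have h4 : lt (μ - e) ν := (htotal ν (μ - e) hne).resolve_left hcon
    have h5 : lt (μ - e + e) (ν + e) := hadd _ _ e h4
    rw [tsub_add_cancel_of_le hle] at h5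
    rw [add_comm e ν] at hlt
    exact hirr μ (htrans _ _ _ h5 hlt)
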